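/- Let (α, 𝒜, μ) and (β, ℬ, ν) be σ-finite measure spaces. Let f, f̃ : α × β → [0,∞) be integrable with respect to μ×ν, let f_X(x) := ∫ f(x,y) dν(y) and f̃_X(x) := ∫ f̃(x,y) dν(y), and let q : α × β → [0,∞) be measurable with ∫ q(x,y) dν(y) = 1 for every x ∈ α. Then ∫ | q(x,y)·f_X(x) − f(x,y) | d(μ×ν) ≤ ∫ | q(x,y)·f̃_X(x) − f̃(x,y) | d(μ×ν) + 2 ∫ | f̃ − f | d(μ×ν). -/

import Mathlib

open MeasureTheory

theorem aux_int {α β : Type*} [MeasurableSpace α] [MeasurableSpace β]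
    (μ : Measure α) (ν : Measure β) [SigmaFinite μ] [SigmaFinite ν]
    (f : α × β → ℝ) (hf_nonneg : ∀ p, 0 ≤ f p) (hf_int : Integrable f (μ.prod ν))
    (q : α × β → ℝ) (hq_meas : Measurable q) (hq_nonneg : ∀ p, 0 ≤ q p)
    (hq_int : ∀ x, ∫ y, q (x, y) ∂ν = 1) :
    Integrable (fun p => q p * (∫ y, f (p.1, y) ∂ν)) (μ.prod ν) := by
  set F : α → ℝ := fun x => ∫ y, f (x, y) ∂ν with hF
  have hF0 : ∀ x, 0 ≤ F x := fun x => integral_nonneg fun y => hf_nonneg _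
  have hF_meas : AEStronglyMeasurable F μ := hf_int.1.integral_prod_right'
  have hqx_int : ∀ x, Integrable (fun y => q (x, y)) ν := by
    intro x
    by_contra h
    have h1 := hq_int x
    rw [integral_undef h] at h1
    exact one_ne_zero h1.symm
  constructor
  · exact hq_meas.aestronglyMeasurable.mul
      (hF_meas.comp_quasiMeasurePreserving Measure.quasiMeasurePreserving_fst)
  · rw [HasFiniteIntegral]
    have key : ∀ p : α × β, ‖q p * F p.1‖ₑ
        = ENNReal.ofReal (q p) * ENNReal.ofReal (F p.1) := by
      intro p
      rw [← ENNReal.ofReal_mul (hq_nonneg p)]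
      exact (Real.enorm_eq_ofReal (mul_nonneg (hq_nonneg p) (hF0 p.1)))
    rw [show (fun a : α × β => ‖q a * ∫ y, f (a.1, y) ∂ν‖ₑ)
        = fun p => ENNReal.ofReal (q p) * ENNReal.ofReal (F p.1) from funext key]
    have hmq : AEMeasurable (fun p : α × β => ENNReal.ofReal (q p) * ENNReal.ofReal (F p.1))
        (μ.prod ν) := by
      exact (hq_meas.ennreal_ofReal.aemeasurable).mul
        ((ENNReal.measurable_ofReal.comp_aemeasurable hF_meas.aemeasurable).comp_quasiMeasurePreserving
          Measure.quasiMeasurePreserving_fst)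
    rw [lintegral_prod _ hmq]
    have inner : ∀ x, ∫⁻ y, ENNReal.ofReal (q (x, y)) * ENNReal.ofReal (F x) ∂ν
        = ENNReal.ofReal (F x) := by
      intro x
      have hm : Measurable fun y => ENNReal.ofReal (q (x, y)) :=
        (hq_meas.comp measurable_prodMk_left).ennreal_ofReal
      rw [lintegral_mul_const _ hm]
      rw [← ofReal_integral_eq_lintegral_ofReal (hqx_int x)
        (ae_of_all _ fun y => hq_nonneg _), hq_int x, ENNReal.ofReal_one, one_mul]
    simp_rw [inner]
    -- now show ∫⁻ x, ofReal (F x) < ∞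
    have hfx_int := hf_int.prod_right_ae
    have : ∫⁻ x, ENNReal.ofReal (F x) ∂μ = ∫⁻ x, ∫⁻ y, ENNReal.ofReal (f (x, y)) ∂ν ∂μ := by
      refine lintegral_congr_ae ?_
      filter_upwards [hfx_int] with x hx
      rw [hF]
      exact ofReal_integral_eq_lintegral_ofReal hx (ae_of_all _ fun y => hf_nonneg _)
    rw [this, ← lintegral_prod _ hf_int.1.aemeasurable.ennreal_ofReal]
    have := hf_int.2
    rw [HasFiniteIntegral] at this
    refine lt_of_le_of_lt (lintegral_mono fun p => ?_) this
    rw [Real.enorm_eq_ofReal (hf_nonneg p)]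


/-- Triangle-inequality decomposition at the end of the proof of Theorem 2 (large
support): for a conditional density `q` and joint densities `f`, `f̃` with marginals
`f_X`, `f̃_X`, the `f_X`-weighted `L¹` distance between `q` and the conditional density of
`f` is at most the corresponding distance for `f̃` plus twice the joint `L¹` distance
between `f̃` and `f`. -/
theorem stmt12 {α β : Type*} [MeasurableSpace α] [MeasurableSpace β]
    (μ : Measure α) (ν : Measure β) [SigmaFinite μ] [SigmaFinite ν]
    (f ftil : α × β → ℝ)
    (hf_nonneg : ∀ p, 0 ≤ f p) (hftil_nonneg : ∀ p, 0 ≤ ftil p)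
    (hf_int : Integrable f (μ.prod ν)) (hftil_int : Integrable ftil (μ.prod ν))
    (fX ftilX : α → ℝ)
    (hfX : ∀ x, fX x = ∫ y, f (x, y) ∂ν) (hftilX : ∀ x, ftilX x = ∫ y, ftil (x, y) ∂ν)
    (q : α × β → ℝ) (hq_meas : Measurable q) (hq_nonneg : ∀ p, 0 ≤ q p)
    (hq_int : ∀ x, ∫ y, q (x, y) ∂ν = 1) :
    ∫ p, |q p * fX p.1 - f p| ∂(μ.prod ν)
      ≤ (∫ p, |q p * ftilX p.1 - ftil p| ∂(μ.prod ν))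
        + 2 * ∫ p, |ftil p - f p| ∂(μ.prod ν) := by
  simp only [hfX, hftilX]
  have hqx_int : ∀ x, Integrable (fun y => q (x, y)) ν := by
    intro x
    by_contra h
    have h1 := hq_int x
    rw [integral_undef h] at h1
    exact one_ne_zero h1.symm
  have hG : Integrable (fun p => q p * (∫ y, f (p.1, y) ∂ν)) (μ.prod ν) :=
    aux_int μ ν f hf_nonneg hf_int q hq_meas hq_nonneg hq_int
  have hGt : Integrable (fun p => q p * (∫ y, ftil (p.1, y) ∂ν)) (μ.prod ν) :=
    aux_int μ ν ftil hftil_nonneg hftil_int q hq_meas hq_nonneg hq_int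
  have h1 : Integrable (fun p => q p * (∫ y, f (p.1, y) ∂ν) - f p) (μ.prod ν) :=
    hG.sub hf_int
  have h2 : Integrable (fun p => q p * (∫ y, ftil (p.1, y) ∂ν) - ftil p) (μ.prod ν) :=
    hGt.sub hftil_int
  have h3 : Integrable (fun p => ftil p - f p) (μ.prod ν) := hftil_int.sub hf_int
  have hD : Integrable (fun p =>
      (q p * (∫ y, f (p.1, y) ∂ν) - f p) - (q p * (∫ y, ftil (p.1, y) ∂ν) - ftil p)
        - (ftil p - f p)) (μ.prod ν) := (h1.sub h2).sub h3
  -- pointwise bound and split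
  have step1 : ∫ p, |q p * (∫ y, f (p.1, y) ∂ν) - f p| ∂(μ.prod ν)
      ≤ (∫ p, |q p * (∫ y, ftil (p.1, y) ∂ν) - ftil p| ∂(μ.prod ν))
        + ((∫ p, |ftil p - f p| ∂(μ.prod ν))
        + ∫ p, |(q p * (∫ y, f (p.1, y) ∂ν) - f p)
            - (q p * (∫ y, ftil (p.1, y) ∂ν) - ftil p) - (ftil p - f p)| ∂(μ.prod ν)) := by
    have key : ∀ p : α × β, |q p * (∫ y, f (p.1, y) ∂ν) - f p|
        ≤ |q p * (∫ y, ftil (p.1, y) ∂ν) - ftil p| + (|ftil p - f p|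
          + |(q p * (∫ y, f (p.1, y) ∂ν) - f p)
            - (q p * (∫ y, ftil (p.1, y) ∂ν) - ftil p) - (ftil p - f p)|) := by
      intro p
      refine le_trans (le_of_eq (congrArg abs (show q p * (∫ y, f (p.1, y) ∂ν) - f p
          = (q p * (∫ y, ftil (p.1, y) ∂ν) - ftil p) + (ftil p - f p)
            + ((q p * (∫ y, f (p.1, y) ∂ν) - f p)
              - (q p * (∫ y, ftil (p.1, y) ∂ν) - ftil p) - (ftil p - f p)) by ring))) ?_
      exact (abs_add_three _ _ _).trans_eq (add_assoc _ _ _)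
    have hsum : Integrable (fun p => |ftil p - f p|
        + |(q p * (∫ y, f (p.1, y) ∂ν) - f p)
          - (q p * (∫ y, ftil (p.1, y) ∂ν) - ftil p) - (ftil p - f p)|) (μ.prod ν) :=
      h3.abs.add hD.abs
    have hmono := integral_mono h1.abs (h2.abs.add hsum) key
    simp only [Pi.add_apply] at hmono
    rwa [integral_add h2.abs hsum, integral_add h3.abs hD.abs] at hmono
  -- the D term is at most ∫ |ftil - f|
  have step2 : ∫ p, |(q p * (∫ y, f (p.1, y) ∂ν) - f p)
      - (q p * (∫ y, ftil (p.1, y) ∂ν) - ftil p) - (ftil p - f p)| ∂(μ.prod ν)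
      ≤ ∫ p, |ftil p - f p| ∂(μ.prod ν) := by
    rw [integral_prod _ hD.abs]
    have inner : ∀ x, ∫ y, |(q (x, y) * (∫ y, f ((x, y).1, y) ∂ν) - f (x, y))
        - (q (x, y) * (∫ y, ftil ((x, y).1, y) ∂ν) - ftil (x, y)) - (ftil (x, y) - f (x, y))| ∂ν
        = |(∫ y, f (x, y) ∂ν) - ∫ y, ftil (x, y) ∂ν| := by
      intro x
      have e1 : ∀ y, |(q (x, y) * (∫ y, f ((x, y).1, y) ∂ν) - f (x, y))
          - (q (x, y) * (∫ y, ftil ((x, y).1, y) ∂ν) - ftil (x, y)) - (ftil (x, y) - f (x, y))|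
          = q (x, y) * |(∫ y, f (x, y) ∂ν) - ∫ y, ftil (x, y) ∂ν| := by
        intro y
        rw [show (q (x, y) * (∫ y, f ((x, y).1, y) ∂ν) - f (x, y))
          - (q (x, y) * (∫ y, ftil ((x, y).1, y) ∂ν) - ftil (x, y)) - (ftil (x, y) - f (x, y))
          = q (x, y) * ((∫ y, f (x, y) ∂ν) - ∫ y, ftil (x, y) ∂ν) from by ring,
          abs_mul, abs_of_nonneg (hq_nonneg (x, y))]
      simp_rw [e1]
      rw [integral_mul_const, hq_int x, one_mul]
    simp_rw [inner]
    have hIf : Integrable (fun x => ∫ y, f (x, y) ∂ν) μ := hf_int.integral_prod_left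
    have hIft : Integrable (fun x => ∫ y, ftil (x, y) ∂ν) μ := hftil_int.integral_prod_left
    have hRint : Integrable (fun x => ∫ y, |ftil (x, y) - f (x, y)| ∂ν) μ := by
      have := h3.abs.integral_prod_left
      simpa using this
    calc ∫ x, |(∫ y, f (x, y) ∂ν) - ∫ y, ftil (x, y) ∂ν| ∂μ
        ≤ ∫ x, ∫ y, |ftil (x, y) - f (x, y)| ∂ν ∂μ := by
          refine integral_mono_ae ((hIf.sub hIft).abs) hRint ?_
          filter_upwards [hf_int.prod_right_ae, hftil_int.prod_right_ae] with x hx hxt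
          rw [← integral_sub hx hxt]
          calc |∫ y, (f (x, y) - ftil (x, y)) ∂ν|
              ≤ ∫ y, |f (x, y) - ftil (x, y)| ∂ν := by
                simpa [Real.norm_eq_abs] using
                  norm_integral_le_integral_norm (fun y => f (x, y) - ftil (x, y)) (μ := ν)
            _ = ∫ y, |ftil (x, y) - f (x, y)| ∂ν := by simp_rw [abs_sub_comm]
      _ = ∫ p, |ftil p - f p| ∂(μ.prod ν) := by
          rw [integral_prod _ h3.abs]
  linarith [step1, step2]
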